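/- For integers 1 ≤ K < d and Θ(u) = (1/K) Σ_{j=0}^{K-1} (K-j) C(d,j) u^{d-j-1}(1-u)^j, the (K+1)-st derivative of Θ at u = 1 equals (-1)^{K+1} ((d! - (d-K)!(K+1)!)/(d-K)!) · (d-K)/K. -/

import Mathlib

open Real Finset

open Polynomial in
lemma aux_iteratedDeriv_polyeval (p : Polynomial ℝ) (n : ℕ) :
    iteratedDeriv n (fun y => p.eval y) = fun x => ((Polynomial.derivative)^[n] p).eval x := by
  induction n with
  | zero => simp [iteratedDeriv_zero]
  | succ n ih =>
    rw [iteratedDeriv_succ, ih]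
    funext x
    rw [Function.iterate_succ_apply']
    exact Polynomial.deriv _

open Polynomial in
lemma aux_eval_iterate_derivative (p : Polynomial ℝ) (n : ℕ) :
    ((Polynomial.derivative)^[n] p).eval 1 = (n.factorial : ℝ) * ((Polynomial.taylor 1 p).coeff n) := by
  rw [← Polynomial.factorial_smul_hasseDeriv]
  simp [Polynomial.taylor_coeff, nsmul_eq_mul]

open Polynomial in
lemma aux_coeff_sum (K d : ℕ) (hKd : K < d) :
    (Polynomial.taylor (1:ℝ) (∑ j ∈ Finset.range K,
      Polynomial.C (((K:ℝ)-j) * (d.choose j)) * Polynomial.X^(d-j-1) * (1 - Polynomial.X)^j)).coeff (K+1)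
    = ∑ j ∈ Finset.range K, ((K:ℝ)-j) * (d.choose j) * (-1)^j * ((d-j-1).choose (K+1-j)) := by
  rw [map_sum, Polynomial.finset_sum_coeff]
  refine Finset.sum_congr rfl fun j hj => ?_
  have hjK : j < K := Finset.mem_range.mp hj
  rw [Polynomial.taylor_apply]
  have h1 : ((Polynomial.C (((K:ℝ)-j) * (d.choose j)) * Polynomial.X^(d-j-1) * (1 - Polynomial.X)^j).comp
      (Polynomial.X + Polynomial.C 1))
      = Polynomial.C (((K:ℝ)-j) * (d.choose j) * (-1)^j) * ((Polynomial.X + 1)^(d-j-1) * Polynomial.X^j) := by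
    simp only [Polynomial.mul_comp, Polynomial.C_comp, Polynomial.pow_comp, Polynomial.X_comp,
      Polynomial.sub_comp, Polynomial.one_comp, map_mul, map_pow, map_neg, map_one, Polynomial.C_1]
    ring
  rw [h1, Polynomial.coeff_C_mul, Polynomial.coeff_mul_X_pow']
  rw [if_pos (by omega : j ≤ K + 1), Polynomial.coeff_X_add_one_pow]

open Polynomial in
lemma aux_D1 (K d : ℕ) (hK : 1 ≤ K) (hKd : K < d) :
    ∑ j ∈ Finset.range K, (((d:ℝ)-j) * (-1)^j * (d.choose j) * ((d-j-1).choose (K+1-j)))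
    = (-1)^(K+1) * K * ((d:ℝ)-K) * ((d:ℝ)-K-1) * (d.choose K) / ((K:ℝ)+1) := by
  set g : ℕ → ℝ := fun j => ((j:ℝ) * ((j:ℝ)-d) / ((K:ℝ)+1)) * (-1)^j * (d.choose j)
      * ((d-j-1).choose (K+1-j)) with hg
  have key : ∀ j ∈ Finset.range K,
      (((d:ℝ)-j) * (-1)^j * (d.choose j) * ((d-j-1).choose (K+1-j))) = g (j+1) - g j := by
    intro j hj
    have hjK : j < K := Finset.mem_range.mp hj
    have hjd2 : j + 2 ≤ d := by omega
    have hd1 : ((d:ℝ)-j-1) ≠ 0 := by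
      have : ((j:ℝ)+2) ≤ (d:ℝ) := by exact_mod_cast hjd2
      linarith
    have hj1 : ((j:ℝ)+1) ≠ 0 := by positivity
    have e1 : ((d-j-1 : ℕ):ℝ) = (d:ℝ)-(j:ℝ)-1 := by
      have h' : d-j-1 + (j+1) = d := by omega
      have := congrArg (Nat.cast (R:=ℝ)) h'; push_cast at this; linarith
    have e2 : ((K+1-j : ℕ):ℝ) = (K:ℝ)+1-(j:ℝ) := by
      have h' : K+1-j + j = K+1 := by omega
      have := congrArg (Nat.cast (R:=ℝ)) h'; push_cast at this; linarith
    have e3 : ((d-j : ℕ):ℝ) = (d:ℝ)-(j:ℝ) := by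
      have h' : d-j + j = d := by omega
      have := congrArg (Nat.cast (R:=ℝ)) h'; push_cast at this; linarith
    have hA : ((d.choose (j+1)):ℝ) = (((d:ℝ)-j) * (d.choose j)) / ((j:ℝ)+1) := by
      have h2 := Nat.choose_succ_right_eq d j
      have hc : ((d.choose (j+1)):ℝ) * ((j:ℝ)+1) = (d.choose j) * ((d-j : ℕ):ℝ) := by
        exact_mod_cast congrArg (Nat.cast (R:=ℝ)) h2
      rw [e3] at hc
      field_simp
      linarith
    have hB : (((d-j-2).choose (K-j)):ℝ)
        = (((K:ℝ)+1-j) * ((d-j-1).choose (K+1-j))) / ((d:ℝ)-j-1) := by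
      have h2 := Nat.add_one_mul_choose_eq (d-j-2) (K-j)
      rw [show d-j-2+1 = d-j-1 by omega, show K-j+1 = K+1-j by omega] at h2
      have hc : ((d-j-1 : ℕ):ℝ) * ((d-j-2).choose (K-j))
          = ((d-j-1).choose (K+1-j)) * ((K+1-j : ℕ):ℝ) := by
        exact_mod_cast congrArg (Nat.cast (R:=ℝ)) h2
      rw [e1, e2] at hc
      field_simp
      linarith
    rw [hg]
    simp only
    rw [show d-(j+1)-1 = d-j-2 by omega, show K+1-(j+1) = K-j by omega, hA, hB]
    have hK1 : ((K:ℝ)+1) ≠ 0 := by positivity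
    push_cast
    field_simp
    ring
  rw [Finset.sum_congr rfl key, Finset.sum_range_sub g, hg]
  simp only
  rw [show K+1-K = 1 by omega, Nat.choose_one_right]
  have e4 : ((d-K-1 : ℕ):ℝ) = (d:ℝ)-(K:ℝ)-1 := by
    have h' : d-K-1 + (K+1) = d := by omega
    have := congrArg (Nat.cast (R:=ℝ)) h'; push_cast at this; linarith
  rw [e4]
  simp only [Nat.cast_zero, zero_mul, mul_zero, sub_zero]
  rw [pow_succ]
  ring

open Polynomial in
lemma aux_D2 (K d : ℕ) (hK : 1 ≤ K) (hKd : K + 2 ≤ d) :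
    ∑ j ∈ Finset.range K, ((-1:ℝ)^j * (d.choose j) * ((d-j-1).choose (K+1-j)))
    = (-1)^(K+1) * (1 + ((d:ℝ)-(K:ℝ)-1) * (d.choose K) - (d.choose (K+1))) := by
  have hX1 : (Polynomial.X + 1 : ℝ[X]) ≠ 0 := by
    intro h
    have := congrArg (Polynomial.eval 0) h
    simp at this
  have hnegpow : ∀ n : ℕ, ((-Polynomial.X : ℝ[X])^n) = Polynomial.C ((-1:ℝ)^n) * Polynomial.X^n := by
    intro n
    rw [neg_pow]
    simp [map_pow]
  have hpoly : (∑ j ∈ Finset.range d,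
        Polynomial.C (((d.choose j):ℝ) * (-1)^j) * ((Polynomial.X+1)^(d-1-j) * Polynomial.X^j))
      = ∑ n ∈ Finset.range d, (-Polynomial.X : ℝ[X])^n := by
    apply mul_left_cancel₀ hX1
    have hR : (Polynomial.X + 1 : ℝ[X]) * ∑ n ∈ Finset.range d, (-Polynomial.X : ℝ[X])^n
        = 1 - (-Polynomial.X : ℝ[X])^d := by
      have := geom_sum_mul (-Polynomial.X : ℝ[X]) d
      linear_combination -this
    rw [hR, Finset.mul_sum]
    have hterm : ∀ j ∈ Finset.range d,
        (Polynomial.X + 1 : ℝ[X]) * (Polynomial.C (((d.choose j):ℝ) * (-1)^j)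
          * ((Polynomial.X+1)^(d-1-j) * Polynomial.X^j))
        = (-Polynomial.X : ℝ[X])^j * (Polynomial.X+1)^(d-j) * ((d.choose j : ℕ) : ℝ[X]) := by
      intro j hj
      have hjd : j < d := Finset.mem_range.mp hj
      rw [show d - j = (d-1-j) + 1 by omega, pow_succ]
      have hC : ((d.choose j : ℕ) : ℝ[X]) = Polynomial.C ((d.choose j : ℕ) : ℝ) := by simp
      rw [hC, hnegpow, map_mul]
      ring
    rw [Finset.sum_congr rfl hterm]
    have hadd := add_pow (-Polynomial.X : ℝ[X]) (Polynomial.X + 1) d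
    rw [show (-Polynomial.X + (Polynomial.X + 1) : ℝ[X]) = 1 by ring, one_pow,
      Finset.sum_range_succ] at hadd
    simp only [Nat.sub_self, pow_zero, mul_one, Nat.choose_self, Nat.cast_one] at hadd
    linear_combination -hadd
  have hcoeff := congrArg (fun p => Polynomial.coeff p (K+1)) hpoly
  have hR : (∑ n ∈ Finset.range d, (-Polynomial.X : ℝ[X])^n).coeff (K+1) = (-1:ℝ)^(K+1) := by
    rw [Polynomial.finset_sum_coeff]
    rw [Finset.sum_eq_single (K+1)]
    · rw [hnegpow, Polynomial.coeff_C_mul, Polynomial.coeff_X_pow, if_pos rfl, mul_one]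
    · intro n hn hne
      rw [hnegpow, Polynomial.coeff_C_mul, Polynomial.coeff_X_pow, if_neg (Ne.symm hne), mul_zero]
    · intro h
      exact absurd (Finset.mem_range.mpr (by omega)) h
  rw [hR, Polynomial.finset_sum_coeff] at hcoeff
  have hterm2 : ∀ j ∈ Finset.range d,
      (Polynomial.C (((d.choose j):ℝ) * (-1)^j) * ((Polynomial.X+1)^(d-1-j) * Polynomial.X^j)).coeff (K+1)
      = if j ≤ K+1 then (-1:ℝ)^j * (d.choose j) * ((d-j-1).choose (K+1-j)) else 0 := by
    intro j hj
    rw [Polynomial.coeff_C_mul, Polynomial.coeff_mul_X_pow']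
    by_cases h : j ≤ K+1
    · rw [if_pos h, if_pos h, Polynomial.coeff_X_add_one_pow, show d-1-j = d-j-1 by omega]
      ring
    · rw [if_neg h, if_neg h, mul_zero]
  rw [Finset.sum_congr rfl hterm2] at hcoeff
  rw [← Finset.sum_subset (Finset.range_subset_range.mpr (by omega : K+2 ≤ d))
    (fun j _ hj => if_neg (by simp only [Finset.mem_range] at hj ⊢; omega))] at hcoeff
  rw [Finset.sum_range_succ, Finset.sum_range_succ] at hcoeff
  rw [if_pos (by omega : K ≤ K+1), if_pos (by omega : K+1 ≤ K+1),
    show K+1-K = 1 by omega, show K+1-(K+1) = 0 by omega,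
    Nat.choose_zero_right, Nat.choose_one_right] at hcoeff
  have hsum : ∀ j ∈ Finset.range K,
      (if j ≤ K+1 then (-1:ℝ)^j * (d.choose j) * ((d-j-1).choose (K+1-j)) else 0)
      = (-1:ℝ)^j * (d.choose j) * ((d-j-1).choose (K+1-j)) := by
    intro j hj
    exact if_pos (by have := Finset.mem_range.mp hj; omega)
  rw [Finset.sum_congr rfl hsum] at hcoeff
  have e4 : ((d-K-1 : ℕ):ℝ) = (d:ℝ)-(K:ℝ)-1 := by
    have h' : d-K-1 + (K+1) = d := by omega
    have := congrArg (Nat.cast (R:=ℝ)) h'; push_cast at this; linarith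
  rw [e4] at hcoeff
  rw [pow_succ] at hcoeff ⊢
  rw [Nat.cast_one] at hcoeff
  linear_combination hcoeff

theorem stmt_9 (K d : ℕ) (hK : 1 ≤ K) (hKd : K < d)
    (Θ : ℝ → ℝ)
    (hΘ : Θ = fun u : ℝ => (1 / K) * ∑ j ∈ Finset.range K,
        ((K:ℝ) - j) * (d.choose j) * u ^ (d - j - 1) * (1 - u) ^ j) :
    iteratedDeriv (K + 1) Θ 1 =
      (-1) ^ (K + 1) *
        (((d.factorial : ℝ) - ((d - K).factorial : ℝ) * ((K + 1).factorial : ℝ)) /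
          ((d - K).factorial : ℝ)) * (((d:ℝ) - K) / K) := by
  classical
  set S : Polynomial ℝ := ∑ j ∈ Finset.range K,
      Polynomial.C (((K:ℝ)-j) * (d.choose j)) * Polynomial.X^(d-j-1) * (1 - Polynomial.X)^j with hS
  set P : Polynomial ℝ := ((1:ℝ)/K) • S with hP
  have hΘP : Θ = fun u => P.eval u := by
    rw [hΘ]
    funext u
    rw [hP, hS]
    rw [Polynomial.eval_smul, Polynomial.eval_finset_sum]
    rw [smul_eq_mul]
    congr 1
    refine Finset.sum_congr rfl fun j hj => ?_
    simp only [Polynomial.eval_mul, Polynomial.eval_pow, Polynomial.eval_sub, Polynomial.eval_one,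
      Polynomial.eval_X, Polynomial.eval_C]
  rw [hΘP, aux_iteratedDeriv_polyeval]
  show Polynomial.eval 1 ((⇑Polynomial.derivative)^[K + 1] P) = _
  rw [aux_eval_iterate_derivative]
  rw [hP, map_smul, Polynomial.coeff_smul, hS, aux_coeff_sum K d hKd]
  rw [smul_eq_mul]
  -- now LHS = (K+1)! * ((1/K) * Σmain)
  rcases eq_or_lt_of_le (by omega : K + 1 ≤ d) with hd | hd
  · -- d = K + 1
    have hz : ∀ j ∈ Finset.range K,
        ((K:ℝ)-j) * (d.choose j) * (-1)^j * ((d-j-1).choose (K+1-j)) = 0 := by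
      intro j hj
      have hjK : j < K := Finset.mem_range.mp hj
      have : (d-j-1).choose (K+1-j) = 0 := Nat.choose_eq_zero_of_lt (by omega)
      rw [this]
      simp
    rw [Finset.sum_congr rfl hz, Finset.sum_const_zero, mul_zero, mul_zero]
    rw [show d - K = 1 by omega, Nat.factorial_one, ← hd]
    simp [Nat.factorial]
  · -- K + 2 ≤ d
    have hd2 : K + 2 ≤ d := by omega
    have hsplit : ∑ j ∈ Finset.range K, ((K:ℝ)-j) * (d.choose j) * (-1)^j * ((d-j-1).choose (K+1-j))
        = (∑ j ∈ Finset.range K, (((d:ℝ)-j) * (-1)^j * (d.choose j) * ((d-j-1).choose (K+1-j))))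
          - ((d:ℝ)-K) * (∑ j ∈ Finset.range K, ((-1:ℝ)^j * (d.choose j) * ((d-j-1).choose (K+1-j)))) := by
      rw [Finset.mul_sum, ← Finset.sum_sub_distrib]
      refine Finset.sum_congr rfl fun j hj => ?_
      ring
    rw [hsplit, aux_D1 K d hK hKd, aux_D2 K d hK hd2]
    -- final algebra
    have hc1 : ((d.choose (K+1)):ℝ) * ((K:ℝ)+1) = ((d.choose K):ℝ) * ((d:ℝ)-K) := by
      have h2 := Nat.choose_succ_right_eq d K
      have hc : ((d.choose (K+1)):ℝ) * ((K:ℝ)+1) = (d.choose K) * ((d-K : ℕ):ℝ) := by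
        exact_mod_cast congrArg (Nat.cast (R:=ℝ)) h2
      rw [show ((d-K : ℕ):ℝ) = (d:ℝ)-(K:ℝ) from by
        have h' : d-K + K = d := by omega
        have := congrArg (Nat.cast (R:=ℝ)) h'; push_cast at this; linarith] at hc
      exact hc
    have hfact : (d.factorial:ℝ) = (d.choose K) * (K.factorial) * ((d-K).factorial) := by
      exact_mod_cast (Nat.choose_mul_factorial_mul_factorial hKd.le).symm
    have hfact2 : (((K+1).factorial : ℕ):ℝ) = ((K:ℝ)+1) * (K.factorial) := by
      rw [Nat.factorial_succ]; push_cast; ring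
    have hKne : (K:ℝ) ≠ 0 := by positivity
    have hK1ne : ((K:ℝ)+1) ≠ 0 := by positivity
    have hdKne : (((d-K).factorial : ℕ):ℝ) ≠ 0 := by
      exact_mod_cast (Nat.factorial_pos _).ne'
    have hc1' : ((d.choose (K+1)):ℝ) = ((d.choose K):ℝ) * ((d:ℝ)-K) / ((K:ℝ)+1) := by
      rw [eq_div_iff hK1ne]; exact hc1
    rw [hfact, hfact2, hc1']
    field_simp
    ring
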